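/- Consider gradient descent on the diagonal quadratic f(w) = (1/2) Σ_{i=1}^d λ_i w_i^2 with λ1 ≥ ... ≥ λd > 0 and learning rate η with 0 < η < 2/(λ1 + λd) and λ1 > λd. Then for any initial point w_0 with (w_0)_d ≠ 0, we have |(w_t)_d| / |(w_t)_1| → ∞ (interpreting the ratio as ∞ when (w_t)_1 = 0); in particular the normalized iterate does not converge to the top eigenspace. -/

import Mathlib

open Filter

/-- GD on a diagonal quadratic with `0 < η < 2/(λ1+λd)` and `λ1 > λd`:
the bottom-eigenvalue component dominates, `|(w_t)_d|/|(w_t)_1| → ∞`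
(interpreted in `ℝ≥0∞`, so the ratio is `∞` when `(w_t)_1 = 0`), and the
normalized iterate does not converge to a unit vector in the top eigenspace. -/
theorem stmt_4 (d : ℕ) (hd : 0 < d) (lam : Fin d → ℝ) (η : ℝ)
    (i0 : Fin d) (ilast : Fin d)
    (hi0 : i0 = ⟨0, hd⟩) (hilast : ilast = ⟨d - 1, Nat.sub_lt hd one_pos⟩)
    (hpos : ∀ i, 0 < lam i)
    (hsorted : ∀ i j : Fin d, i ≤ j → lam j ≤ lam i)
    (hη : 0 < η) (hη2 : η < 2 / (lam i0 + lam ilast))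
    (hgap : lam ilast < lam i0)
    (w : ℕ → EuclideanSpace ℝ (Fin d))
    (hrec : ∀ t (i : Fin d), w (t + 1) i = (1 - η * lam i) * w t i)
    (hw0 : w 0 ilast ≠ 0) :
    Tendsto (fun t => ENNReal.ofReal |w t ilast| / ENNReal.ofReal |w t i0|)
        atTop (nhds ⊤) ∧
      ¬ ∃ v : EuclideanSpace ℝ (Fin d), ‖v‖ = 1 ∧
          (∃ c : ℝ, v = c • EuclideanSpace.single i0 (1 : ℝ)) ∧
          Tendsto (fun t => ‖w t‖⁻¹ • w t) atTop (nhds v) := by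
  set a := 1 - η * lam ilast with ha_def
  set b := 1 - η * lam i0 with hb_def
  have hS : 0 < lam i0 + lam ilast := by
    have := hpos i0; have := hpos ilast; linarith
  have hηS : η * (lam i0 + lam ilast) < 2 := by
    have := (lt_div_iff₀ hS).mp hη2; linarith
  have hl0 := hpos i0
  have hll := hpos ilast
  have ha : 0 < a := by
    have : η * lam ilast < 1 := by nlinarith
    simp only [ha_def]; linarith
  have hb : |b| < a := by
    rw [abs_lt]; constructor <;> [skip; skip] <;> simp only [ha_def, hb_def] <;> nlinarith
  have hne : ilast ≠ i0 := by
    intro h; rw [h] at hgap; exact lt_irrefl _ hgap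
  -- closed form
  have hcf : ∀ t (i : Fin d), w t i = (1 - η * lam i) ^ t * w 0 i := by
    intro t i
    induction t with
    | zero => simp
    | succ n ih => rw [hrec, ih, pow_succ]; ring
  have hwl : ∀ t, w t ilast = a ^ t * w 0 ilast := fun t => hcf t ilast
  have hwlne : ∀ t, w t ilast ≠ 0 := by
    intro t; rw [hwl]
    exact mul_ne_zero (pow_ne_zero _ (ne_of_gt ha)) hw0
  have hnum_pos : ∀ t, 0 < |w t ilast| := fun t => abs_pos.mpr (hwlne t)
  -- the key tendsto
  have hmain : Tendsto (fun t => ENNReal.ofReal |w t ilast| / ENNReal.ofReal |w t i0|)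
      atTop (nhds ⊤) := by
    by_cases hz : b = 0 ∨ w 0 i0 = 0
    · -- denominator is eventually 0
      have hev : (fun t => ENNReal.ofReal |w t ilast| / ENNReal.ofReal |w t i0|) =ᶠ[atTop] (fun _ => ⊤) := by
        filter_upwards [eventually_ge_atTop 1] with t ht
        have hd0 : w t i0 = 0 := by
          rw [hcf t i0]
          rcases hz with hz | hz
          · rw [← hb_def, hz, zero_pow (by omega), zero_mul]
          · rw [hz, mul_zero]
        rw [hd0, abs_zero, ENNReal.ofReal_zero, ENNReal.div_zero]
        simpa using (hnum_pos t)
      exact Tendsto.congr' hev.symm tendsto_const_nhds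
    · push_neg at hz
      obtain ⟨hbne, h0ne⟩ := hz
      have hbpos : 0 < |b| := abs_pos.mpr hbne
      have h0pos : 0 < |w 0 i0| := abs_pos.mpr h0ne
      have hdpos : ∀ t, 0 < |w t i0| := by
        intro t; rw [hcf t i0, abs_mul, abs_pow]
        exact mul_pos (pow_pos hbpos t) h0pos
      have heq : ∀ t, ENNReal.ofReal |w t ilast| / ENNReal.ofReal |w t i0|
          = ENNReal.ofReal ((a / |b|) ^ t * (|w 0 ilast| / |w 0 i0|)) := by
        intro t
        rw [← ENNReal.ofReal_div_of_pos (hdpos t)]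
        congr 1
        rw [hwl t, hcf t i0, abs_mul, abs_mul, abs_pow, abs_pow, abs_of_pos ha,
          div_pow, div_mul_div_comm]
      have hrt : Tendsto (fun t => (a / |b|) ^ t * (|w 0 ilast| / |w 0 i0|)) atTop atTop := by
        apply Tendsto.atTop_mul_const (div_pos (hnum_pos 0) h0pos)
        exact tendsto_pow_atTop_atTop_of_one_lt ((one_lt_div hbpos).mpr hb)
      have hcomp := ENNReal.tendsto_ofReal_atTop.comp hrt
      simp only [Function.comp] at hcomp
      exact Tendsto.congr (fun t => (heq t).symm) hcomp
  refine ⟨hmain, ?_⟩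
  rintro ⟨v, hv1, ⟨c, rfl⟩, hconv⟩
  -- coordinates of the limit
  have hc1 : |c| = 1 := by
    rw [norm_smul, EuclideanSpace.norm_single] at hv1
    simpa using hv1
  have hproj : ∀ i : Fin d, Tendsto (fun t => ‖w t‖⁻¹ * w t i) atTop
      (nhds ((c • EuclideanSpace.single i0 (1 : ℝ)) i)) := by
    intro i
    have := ((EuclideanSpace.proj i).continuous.tendsto _).comp hconv
    simpa [Function.comp_def] using this
  have hvi0 : (c • EuclideanSpace.single i0 (1 : ℝ)) i0 = c := by
    simp [EuclideanSpace.single_apply]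
  have hvil : (c • EuclideanSpace.single i0 (1 : ℝ)) ilast = 0 := by
    simp [EuclideanSpace.single_apply, hne]
  have hti0 := hproj i0; rw [hvi0] at hti0
  have htil := hproj ilast; rw [hvil] at htil
  -- if the i0-coordinate dies, the limit can't have |c|=1
  have hcne : c ≠ 0 := by intro h; rw [h] at hc1; simp at hc1
  by_cases hz : b = 0 ∨ w 0 i0 = 0
  · have hev : ∀ᶠ t in atTop, ‖w t‖⁻¹ * w t i0 = 0 := by
      filter_upwards [eventually_ge_atTop 1] with t ht
      have : w t i0 = 0 := by
        rw [hcf t i0]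
        rcases hz with hz | hz
        · rw [← hb_def, hz, zero_pow (by omega), zero_mul]
        · rw [hz, mul_zero]
      rw [this, mul_zero]
    have : Tendsto (fun _ : ℕ => (0 : ℝ)) atTop (nhds c) := Tendsto.congr' hev hti0
    exact hcne (tendsto_nhds_unique tendsto_const_nhds this).symm
  · push_neg at hz
    obtain ⟨hbne, h0ne⟩ := hz
    have hbpos : 0 < |b| := abs_pos.mpr hbne
    have h0pos : 0 < |w 0 i0| := abs_pos.mpr h0ne
    -- |u_t i0| → |c| = 1, |u_t ilast| → 0
    have habs0 : Tendsto (fun t => |‖w t‖⁻¹ * w t i0|) atTop (nhds 1) := by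
      have := hti0.abs; rwa [hc1] at this
    have habsl : Tendsto (fun t => |‖w t‖⁻¹ * w t ilast|) atTop (nhds 0) := by
      have := htil.abs; simpa using this
    have hev1 : ∀ᶠ t in atTop, (1:ℝ)/2 < |‖w t‖⁻¹ * w t i0| :=
      habs0.eventually_const_lt (by norm_num)
    have hev2 : ∀ᶠ t in atTop, |‖w t‖⁻¹ * w t ilast| < 1/2 :=
      habsl.eventually_lt_const (by norm_num)
    have hgrow : Tendsto (fun t => (a / |b|) ^ t) atTop atTop :=
      tendsto_pow_atTop_atTop_of_one_lt ((one_lt_div hbpos).mpr hb)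
    have hbig : ∀ᶠ t in atTop, |w 0 i0| / |w 0 ilast| < (a / |b|) ^ t :=
      hgrow.eventually (eventually_gt_atTop (|w 0 i0| / |w 0 ilast|))
    have : ∀ᶠ t : ℕ in atTop, False := by
      filter_upwards [hev1, hev2, hbig] with t h1 h2 h3
      have hwn : 0 < ‖w t‖ := by
        have : w t ≠ 0 := fun h => hwlne t (by rw [h]; rfl)
        exact norm_pos_iff.mpr this
      have hlt : |w t ilast| < |w t i0| := by
        have h4 : |‖w t‖⁻¹ * w t ilast| < |‖w t‖⁻¹ * w t i0| := lt_trans h2 h1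
        rw [abs_mul, abs_mul, abs_of_pos (inv_pos.mpr hwn)] at h4
        exact lt_of_mul_lt_mul_left h4 (le_of_lt (inv_pos.mpr hwn))
      rw [hwl t, hcf t i0, abs_mul, abs_mul, abs_pow, abs_pow, abs_of_pos ha] at hlt
      have h5 : (a / |b|) ^ t * |w 0 ilast| < |w 0 i0| := by
        rw [div_pow]
        rw [div_mul_eq_mul_div, div_lt_iff₀ (pow_pos hbpos t)]
        calc a ^ t * |w 0 ilast| < |b| ^ t * |w 0 i0| := hlt
          _ = |w 0 i0| * |b| ^ t := mul_comm _ _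
      have h6 : (a / |b|) ^ t < |w 0 i0| / |w 0 ilast| := by
        rw [lt_div_iff₀ (hnum_pos 0)]; exact h5
      exact absurd (lt_trans h3 h6) (lt_irrefl _)
    exact this.exists.choose_spec
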